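/- Let A and B be groups, nilpotent of class m and n respectively, and let k ≥ 1. Then the k-nilpotent product A ∗_{n_k} B is a nilpotent group of class at most max{k, m, n}. -/

import Mathlib

open Monoid

open scoped commutatorElement

/-- The verbal subgroup `W(G)`: the subgroup of `G` generated by all evaluations of the
words of `W` at tuples of elements of `G`. -/
def verbalSubgroup (W : Set (FreeGroup ℕ)) (G : Type*) [Group G] : Subgroup G :=
  Subgroup.closure {x | ∃ w ∈ W, ∃ f : ℕ → G, FreeGroup.lift f w = x}

theorem lift_comp_eval {G H : Type*} [Group G] [Group H] (φ : G →* H) (f : ℕ → G)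
    (w : FreeGroup ℕ) : φ (FreeGroup.lift f w) = FreeGroup.lift (φ ∘ f) w := by
  have h : φ.comp (FreeGroup.lift f) = FreeGroup.lift (φ ∘ f) :=
    FreeGroup.ext_hom _ _ (fun a => by simp)
  exact DFunLike.congr_fun h w

theorem verbalSubgroup_map_le {G H : Type*} [Group G] [Group H] (W : Set (FreeGroup ℕ))
    (φ : G →* H) : (verbalSubgroup W G).map φ ≤ verbalSubgroup W H := by
  rw [verbalSubgroup, MonoidHom.map_closure, Subgroup.closure_le]
  rintro x ⟨y, ⟨w, hw, f, rfl⟩, rfl⟩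
  exact Subgroup.subset_closure ⟨w, hw, φ ∘ f, (lift_comp_eval φ f w).symm⟩

/-- Verbal subgroups are normal. -/
instance verbalSubgroup_normal (W : Set (FreeGroup ℕ)) (G : Type*) [Group G] :
    (verbalSubgroup W G).Normal := by
  constructor
  intro n hn g
  have h := verbalSubgroup_map_le (G := G) (H := G) W (MulAut.conj g).toMonoidHom
  have h2 : (MulAut.conj g).toMonoidHom n ∈ verbalSubgroup W G := h ⟨n, hn, rfl⟩
  simpa using h2

/-- The subgroup `[A,B]` of the free product `A ∗ B` generated by the commutators
`[a,b] = a * b * a⁻¹ * b⁻¹` with `a ∈ A`, `b ∈ B`. -/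
def commSubgroup (A B : Type*) [Group A] [Group B] : Subgroup (Coprod A B) :=
  Subgroup.closure {x | ∃ (a : A) (b : B), x = ⁅(Coprod.inl a : Coprod A B), Coprod.inr b⁆}

/-- The kernel of the verbal product: (the normal closure of) `W(A ∗ B) ∩ [A,B]`.
Since `W(A ∗ B) ∩ [A,B]` is in fact a normal subgroup of `A ∗ B`, taking the normal
closure does not change the subgroup. -/
def verbalProductKer (W : Set (FreeGroup ℕ)) (A B : Type*) [Group A] [Group B] :
    Subgroup (Coprod A B) :=
  Subgroup.normalClosure ((verbalSubgroup W (Coprod A B) ⊓ commSubgroup A B : Subgroup _) : Set _)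

instance verbalProductKer_normal (W : Set (FreeGroup ℕ)) (A B : Type*) [Group A] [Group B] :
    (verbalProductKer W A B).Normal := Subgroup.normalClosure_normal

/-- The verbal product `A ∗_W B := (A ∗ B)/(W(A ∗ B) ∩ [A,B])`. -/
abbrev VerbalProduct (W : Set (FreeGroup ℕ)) (A B : Type*) [Group A] [Group B] : Type _ :=
  Coprod A B ⧸ verbalProductKer W A B

/-- The quotient homomorphism `q : A ∗ B → A ∗_W B`. -/
def vq (W : Set (FreeGroup ℕ)) (A B : Type*) [Group A] [Group B] :
    Coprod A B →* VerbalProduct W A B :=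
  QuotientGroup.mk' (verbalProductKer W A B)

/-- The copy of `A` inside the verbal product `A ∗_W B`. -/
def vinl (W : Set (FreeGroup ℕ)) (A B : Type*) [Group A] [Group B] :
    A →* VerbalProduct W A B := (vq W A B).comp Coprod.inl

/-- The copy of `B` inside the verbal product `A ∗_W B`. -/
def vinr (W : Set (FreeGroup ℕ)) (A B : Type*) [Group A] [Group B] :
    B →* VerbalProduct W A B := (vq W A B).comp Coprod.inr

/-- `[A,B]^w`, the image of `[A,B]` in the verbal product `A ∗_W B`. -/
def commW (W : Set (FreeGroup ℕ)) (A B : Type*) [Group A] [Group B] :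
    Subgroup (VerbalProduct W A B) := (commSubgroup A B).map (vq W A B)

/-- The words `n_k` defining nilpotent products: `n_1 = [x_2, x_1]`,
`n_k = [x_{k+1}, n_{k-1}]` (generators indexed from `0`, so `x_i = FreeGroup.of (i-1)`). -/
def nWord : ℕ → FreeGroup ℕ
  | 0 => 1
  | 1 => ⁅FreeGroup.of 1, FreeGroup.of 0⁆
  | (k + 2) => ⁅FreeGroup.of (k + 2), nWord (k + 1)⁆


/-! ### Auxiliary lemmas -/

open Subgroup

section Aux

lemma nWord_succ' (j : ℕ) (hj : 1 ≤ j) :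
    nWord (j + 1) = ⁅FreeGroup.of (j + 1), nWord j⁆ := by
  match j, hj with
  | (i + 1), _ => rfl

lemma nWord_lift_congr {G : Type*} [Group G] (f f' : ℕ → G) :
    ∀ j, (∀ i ≤ j, f i = f' i) →
      FreeGroup.lift f (nWord j) = FreeGroup.lift f' (nWord j)
  | 0, _ => by simp [nWord]
  | 1, h => by
      simp [nWord, map_commutatorElement, h 0 (by norm_num), h 1 le_rfl]
  | (j + 2), h => by
      simp only [nWord, map_commutatorElement, FreeGroup.lift_apply_of]
      rw [h (j + 2) le_rfl, nWord_lift_congr f f' (j + 1) (fun i hi => h i (by omega))]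

lemma commutator_mem_verbal {G : Type*} [Group G] (j : ℕ) (hj : 1 ≤ j)
    (g x : G) (hx : x ∈ verbalSubgroup {nWord j} G) :
    ⁅g, x⁆ ∈ verbalSubgroup {nWord (j + 1)} G := by
  induction hx using Subgroup.closure_induction with
  | mem y hy =>
      obtain ⟨w, hw, f, rfl⟩ := hy
      rw [Set.mem_singleton_iff] at hw
      subst hw
      set f' : ℕ → G := Function.update f (j + 1) g with hf'
      have h1 : FreeGroup.lift f' (nWord j) = FreeGroup.lift f (nWord j) :=
        nWord_lift_congr f' f j (fun i hi => Function.update_of_ne (by omega) _ _)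
      have h2 : FreeGroup.lift f' (nWord (j + 1)) = ⁅g, FreeGroup.lift f (nWord j)⁆ := by
        rw [nWord_succ' j hj, map_commutatorElement, h1]
        congr 1
        simp [hf']
      exact Subgroup.subset_closure ⟨nWord (j + 1), rfl, f', h2⟩
  | one => simpa using one_mem _
  | mul x y hxc hyc ihx ihy =>
      have e : ⁅g, x * y⁆ = ⁅g, x⁆ * (x * ⁅g, y⁆ * x⁻¹) := by group
      rw [e]
      exact mul_mem ihx ((verbalSubgroup_normal _ _).conj_mem _ ihy x)
  | inv x hxc ihx =>
      have e : ⁅g, x⁻¹⁆ = x⁻¹ * ⁅g, x⁆⁻¹ * x := by group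
      rw [e]
      simpa using (verbalSubgroup_normal _ _).conj_mem _ (inv_mem ihx) x⁻¹

lemma lcs_le_verbal {G : Type*} [Group G] (j : ℕ) (hj : 1 ≤ j) :
    (⊤ : Subgroup G).lowerCentralSeries j ≤ verbalSubgroup {nWord j} G := by
  induction j with
  | zero => omega
  | succ j ih =>
    rcases Nat.lt_or_ge j 1 with h1 | h1
    · obtain rfl : j = 0 := by omega
      rw [show (⊤ : Subgroup G).lowerCentralSeries (0 + 1) = ⁅(⊤ : Subgroup G), ⊤⁆ from rfl,
        Subgroup.commutator_le]
      intro a _ b _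
      refine Subgroup.subset_closure ⟨nWord 1, rfl, fun i => if i = 0 then b else a, ?_⟩
      simp [nWord, map_commutatorElement]
    · rw [show (⊤ : Subgroup G).lowerCentralSeries (j + 1) = ⁅(⊤ : Subgroup G).lowerCentralSeries j, ⊤⁆ from rfl,
        Subgroup.commutator_le]
      intro x hx g _
      have hx' : x ∈ verbalSubgroup {nWord j} G := ih h1 hx
      have h2 := commutator_mem_verbal j h1 g x hx'
      have e : ⁅x, g⁆ = ⁅g, x⁆⁻¹ := by group
      rw [e]
      exact inv_mem h2

lemma conj_mem_commSubgroup {A B : Type*} [Group A] [Group B] (g : Coprod A B) :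
    ∀ x ∈ commSubgroup A B, g * x * g⁻¹ ∈ commSubgroup A B := by
  induction g using Coprod.induction_on with
  | inl a =>
      intro x hx
      unfold commSubgroup at hx
      induction hx using Subgroup.closure_induction with
      | mem y hy =>
          obtain ⟨c, b, rfl⟩ := hy
          have e : Coprod.inl a * ⁅(Coprod.inl c : Coprod A B), Coprod.inr b⁆ *
              (Coprod.inl a)⁻¹ =
              ⁅(Coprod.inl (a * c) : Coprod A B), Coprod.inr b⁆ *
              ⁅(Coprod.inl a : Coprod A B), Coprod.inr b⁆⁻¹ := by
            rw [map_mul]; group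
          rw [e]
          exact mul_mem (Subgroup.subset_closure ⟨a * c, b, rfl⟩)
            (inv_mem (Subgroup.subset_closure ⟨a, b, rfl⟩))
      | one => simpa using one_mem _
      | mul x y hxc hyc ihx ihy =>
          have e : Coprod.inl a * (x * y) * (Coprod.inl a)⁻¹ =
              (Coprod.inl a * x * (Coprod.inl a)⁻¹) *
              (Coprod.inl a * y * (Coprod.inl a)⁻¹) := by group
          rw [e]; exact mul_mem ihx ihy
      | inv x hxc ihx =>
          have e : Coprod.inl a * x⁻¹ * (Coprod.inl a)⁻¹ =
              (Coprod.inl a * x * (Coprod.inl a)⁻¹)⁻¹ := by group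
          rw [e]; exact inv_mem ihx
  | inr b =>
      intro x hx
      unfold commSubgroup at hx
      induction hx using Subgroup.closure_induction with
      | mem y hy =>
          obtain ⟨c, d, rfl⟩ := hy
          have e : Coprod.inr b * ⁅(Coprod.inl c : Coprod A B), Coprod.inr d⁆ *
              (Coprod.inr b)⁻¹ =
              ⁅(Coprod.inl c : Coprod A B), Coprod.inr b⁆⁻¹ *
              ⁅(Coprod.inl c : Coprod A B), (Coprod.inr (b * d) : Coprod A B)⁆ := by
            rw [map_mul]; group
          rw [e]
          exact mul_mem (inv_mem (Subgroup.subset_closure ⟨c, b, rfl⟩))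
            (Subgroup.subset_closure ⟨c, b * d, rfl⟩)
      | one => simpa using one_mem _
      | mul x y hxc hyc ihx ihy =>
          have e : Coprod.inr b * (x * y) * (Coprod.inr b)⁻¹ =
              (Coprod.inr b * x * (Coprod.inr b)⁻¹) *
              (Coprod.inr b * y * (Coprod.inr b)⁻¹) := by group
          rw [e]; exact mul_mem ihx ihy
      | inv x hxc ihx =>
          have e : Coprod.inr b * x⁻¹ * (Coprod.inr b)⁻¹ =
              (Coprod.inr b * x * (Coprod.inr b)⁻¹)⁻¹ := by group
          rw [e]; exact inv_mem ihx
  | mul g h ihg ihh =>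
      intro x hx
      have e : g * h * x * (g * h)⁻¹ = g * (h * x * h⁻¹) * g⁻¹ := by group
      rw [e]
      exact ihg _ (ihh x hx)

instance commSubgroup_normal (A B : Type*) [Group A] [Group B] :
    (commSubgroup A B).Normal :=
  ⟨fun x hx g => conj_mem_commSubgroup g x hx⟩

lemma ker_pi_le_comm {A B : Type*} [Group A] [Group B] :
    (Coprod.lift (MonoidHom.inl A B) (MonoidHom.inr A B)).ker ≤ commSubgroup A B := by
  set qC := QuotientGroup.mk' (commSubgroup A B) with hqC
  have comm : ∀ (a : A) (b : B), Commute (qC (Coprod.inl a)) (qC (Coprod.inr b)) := by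
    intro a b
    rw [← commutatorElement_eq_one_iff_commute, ← map_commutatorElement]
    exact (QuotientGroup.eq_one_iff _).mpr (by unfold commSubgroup; exact Subgroup.subset_closure ⟨a, b, rfl⟩)
  set ρ := MonoidHom.noncommCoprod (qC.comp Coprod.inl) (qC.comp Coprod.inr) comm with hρ
  have hcomp : ρ.comp (Coprod.lift (MonoidHom.inl A B) (MonoidHom.inr A B)) = qC := by
    apply Coprod.hom_ext <;> ext x <;>
      simp [hρ, MonoidHom.noncommCoprod_apply]
  intro x hx
  have h1 : qC x = 1 := by
    rw [← hcomp]
    simp [MonoidHom.mem_ker.mp hx]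
  exact (QuotientGroup.eq_one_iff x).mp h1

lemma lcs_prod_bot {A B : Type*} [Group A] [Group B] (N : ℕ)
    (hA : (⊤ : Subgroup A).lowerCentralSeries N = ⊥) (hB : (⊤ : Subgroup B).lowerCentralSeries N = ⊥) :
    (⊤ : Subgroup (A × B)).lowerCentralSeries N = ⊥ := by
  rw [eq_bot_iff]
  intro x hx
  have h1 : x.1 ∈ (⊤ : Subgroup A).lowerCentralSeries N :=
    Subgroup.lowerCentralSeries.map (MonoidHom.fst A B) N ⟨x, hx, rfl⟩
  have h2 : x.2 ∈ (⊤ : Subgroup B).lowerCentralSeries N :=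
    Subgroup.lowerCentralSeries.map (MonoidHom.snd A B) N ⟨x, hx, rfl⟩
  rw [hA, Subgroup.mem_bot] at h1
  rw [hB, Subgroup.mem_bot] at h2
  rw [Subgroup.mem_bot]
  exact Prod.ext h1 h2

lemma lcs_map_surjective {G H : Type*} [Group G] [Group H] (f : G →* H)
    (hf : Function.Surjective f) (i : ℕ) :
    ((⊤ : Subgroup G).lowerCentralSeries i).map f = (⊤ : Subgroup H).lowerCentralSeries i := by
  induction i with
  | zero =>
      simpa using Subgroup.map_top_of_surjective f hf
  | succ i ih =>
      rw [show (⊤ : Subgroup G).lowerCentralSeries (i + 1) = ⁅(⊤ : Subgroup G).lowerCentralSeries i, ⊤⁆ from rfl,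
        show (⊤ : Subgroup H).lowerCentralSeries (i + 1) = ⁅(⊤ : Subgroup H).lowerCentralSeries i, ⊤⁆ from rfl,
        Subgroup.map_commutator, ih, Subgroup.map_top_of_surjective f hf]

end Aux

/-- The `k`-nilpotent product of nilpotent groups of classes `m` and `n` is nilpotent of
class at most `max {k, m, n}`. -/
theorem nilpotentProduct_isNilpotent {A B : Type*} [Group A] [Group B]
    [Group.IsNilpotent A] [Group.IsNilpotent B] (k m n : ℕ) (hk : 1 ≤ k)
    (hm : Group.nilpotencyClass A = m) (hn : Group.nilpotencyClass B = n) :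
    Group.IsNilpotent (VerbalProduct {nWord k} A B) ∧
    (⊤ : Subgroup (VerbalProduct {nWord k} A B)).lowerCentralSeries (max k (max m n)) = ⊥ := by
  set N := max k (max m n) with hN
  have hA : (⊤ : Subgroup A).lowerCentralSeries N = ⊥ := by
    rw [eq_bot_iff]
    calc (⊤ : Subgroup A).lowerCentralSeries N ≤ (⊤ : Subgroup A).lowerCentralSeries m :=
          Subgroup.lowerCentralSeries_antitone _ (by omega)
      _ = ⊥ := by rw [← hm]; exact Subgroup.lowerCentralSeries_nilpotencyClass
  have hB : (⊤ : Subgroup B).lowerCentralSeries N = ⊥ := by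
    rw [eq_bot_iff]
    calc (⊤ : Subgroup B).lowerCentralSeries N ≤ (⊤ : Subgroup B).lowerCentralSeries n :=
          Subgroup.lowerCentralSeries_antitone _ (by omega)
      _ = ⊥ := by rw [← hn]; exact Subgroup.lowerCentralSeries_nilpotencyClass
  have key : (⊤ : Subgroup (Coprod A B)).lowerCentralSeries N ≤ verbalProductKer {nWord k} A B := by
    refine le_trans (le_inf ?_ ?_ :
        (⊤ : Subgroup (Coprod A B)).lowerCentralSeries N ≤
          verbalSubgroup {nWord k} (Coprod A B) ⊓ commSubgroup A B)
      Subgroup.le_normalClosure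
    · exact le_trans (Subgroup.lowerCentralSeries_antitone _ (le_max_left _ _)) (lcs_le_verbal k hk)
    · intro x hx
      apply ker_pi_le_comm
      rw [MonoidHom.mem_ker]
      have h1 : (Coprod.lift (MonoidHom.inl A B) (MonoidHom.inr A B)) x ∈
          (⊤ : Subgroup (A × B)).lowerCentralSeries N :=
        Subgroup.lowerCentralSeries.map _ N ⟨x, hx, rfl⟩
      rw [lcs_prod_bot N hA hB, Subgroup.mem_bot] at h1
      exact h1
  have hbot : (⊤ : Subgroup (VerbalProduct {nWord k} A B)).lowerCentralSeries N = ⊥ := by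
    rw [← lcs_map_surjective (vq {nWord k} A B) (QuotientGroup.mk'_surjective _) N,
      eq_bot_iff]
    rintro x ⟨y, hy, rfl⟩
    rw [Subgroup.mem_bot]
    exact (QuotientGroup.eq_one_iff y).mpr (key hy)
  exact ⟨Subgroup.nilpotent_iff_lowerCentralSeries.mpr ⟨N, hbot⟩, hbot⟩
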